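/- Let ω = (−1 + i√3)/2 and let Q be an n×n nontrivial cube root Seidel matrix in standard form satisfying Q² = (n−1)·I + μ·Q for a real number μ. Then μ is an integer m, and exactly one of the following three cases holds: n ≡ 0 (mod 9) and m ≡ 7 (mod 9); or n ≡ 3 (mod 9) and m ≡ 1 (mod 9); or n ≡ 6 (mod 9) and m ≡ 4 (mod 9). -/

import Mathlib

/-- `ω = (−1 + i√3)/2`, a primitive cube root of unity. -/
noncomputable def ω3 : ℂ := (-1 + Complex.I * Real.sqrt 3) / 2

/-- A cube root Seidel matrix: self-adjoint, zero diagonal, off-diagonal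
entries among the cube roots of unity. -/
def IsCubeRootSeidel {n : ℕ} (Q : Matrix (Fin n) (Fin n) ℂ) : Prop :=
  Q.IsHermitian ∧ (∀ i, Q i i = 0) ∧
    ∀ i j, i ≠ j → Q i j = 1 ∨ Q i j = ω3 ∨ Q i j = ω3 ^ 2

/-- Standard form: every off-diagonal entry in the first row and first column
equals 1. -/
def IsStandardForm {n : ℕ} (Q : Matrix (Fin n) (Fin n) ℂ) : Prop :=
  ∀ i j : Fin n, i ≠ j → (i.val = 0 ∨ j.val = 0) → Q i j = 1

/-- Nontrivial: some off-diagonal entry is not equal to 1. -/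
def IsNontrivial {n : ℕ} (Q : Matrix (Fin n) (Fin n) ℂ) : Prop :=
  ∃ i j : Fin n, i ≠ j ∧ Q i j ≠ 1

lemma omega_quad : ω3 ^ 2 = -1 - ω3 := by
  have h3 : ((Real.sqrt 3 : ℝ) : ℂ)^2 = 3 := by
    rw [← Complex.ofReal_pow, Real.sq_sqrt (by norm_num : (3:ℝ) ≥ 0)]
    norm_num
  rw [show ω3 = (-1 + Complex.I * (Real.sqrt 3 : ℝ))/2 from rfl]
  linear_combination (((Real.sqrt 3 : ℝ):ℂ)^2/4) * Complex.I_sq - (1/4 : ℂ) * h3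

lemma omega_im : ω3.im ≠ 0 := by
  intro h
  have hr : ω3 = ((ω3.re : ℝ) : ℂ) := Complex.ext rfl (by simp [h])
  have hq := omega_quad
  rw [hr] at hq
  have : (ω3.re : ℝ)^2 = -1 - ω3.re := by exact_mod_cast hq
  nlinarith [sq_nonneg (2*ω3.re + 1)]

lemma omega_ne_one : ω3 ≠ 1 := by
  intro h; have hq := omega_quad; rw [h] at hq; norm_num at hq

lemma omega_ne_zero : ω3 ≠ 0 := by
  intro h; have hq := omega_quad; rw [h] at hq; norm_num at hq

lemma omega_sq_ne_one : ω3 ^ 2 ≠ 1 := by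
  intro h
  have hq := omega_quad
  have h2 : ω3 = -2 := by linear_combination hq - h
  rw [h2] at h; norm_num at h

lemma omega_sq_ne_omega : ω3 ^ 2 ≠ ω3 := by
  intro h
  have hq := omega_quad
  have h2 : ω3 = -(1/2) := by linear_combination (hq - h)/2
  rw [h2] at h; norm_num at h

lemma omega_sq_ne_zero : ω3 ^ 2 ≠ 0 := by
  intro h
  have h2 : ω3 = -1 := by linear_combination omega_quad - h
  have hq := omega_quad
  rw [h2] at hq; norm_num at hq

lemma zero_ne_omega : (0:ℂ) ≠ ω3 := fun h => omega_ne_zero h.symm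

lemma zero_ne_omega_sq : (0:ℂ) ≠ ω3 ^ 2 := fun h => omega_sq_ne_zero h.symm

lemma omega_conj : (starRingEnd ℂ) ω3 = ω3 ^ 2 := by
  rw [omega_quad, show ω3 = (-1 + Complex.I * (Real.sqrt 3 : ℝ))/2 from rfl]
  simp [map_div₀, Complex.conj_I, Complex.conj_ofReal, map_ofNat]
  ring

lemma omega_conj_sq : (starRingEnd ℂ) (ω3 ^ 2) = ω3 := by
  rw [map_pow, omega_conj]
  linear_combination (ω3^2 - ω3) * omega_quad

lemma pair_unique {x y x' y' : ℤ} (h : (x:ℂ) + (y:ℂ) * ω3 = (x':ℂ) + (y':ℂ) * ω3) :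
    x = x' ∧ y = y' := by
  have him := congrArg Complex.im h
  simp only [Complex.add_im, Complex.mul_im, Complex.intCast_im, Complex.intCast_re,
    zero_add, zero_mul, add_zero, mul_zero] at him
  have hy : (y:ℝ) = (y':ℝ) := mul_right_cancel₀ omega_im him
  have hy' : y = y' := by exact_mod_cast hy
  subst hy'
  have hx : (x:ℂ) = (x':ℂ) := by linear_combination h
  exact ⟨by exact_mod_cast hx, rfl⟩

theorem cubeRootSeidel_mod_nine_cases
    (n : ℕ) (Q : Matrix (Fin n) (Fin n) ℂ) (μ : ℝ)
    (hQ : IsCubeRootSeidel Q) (hsf : IsStandardForm Q) (hnt : IsNontrivial Q)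
    (heq : Q ^ 2 = ((n : ℂ) - 1) • (1 : Matrix (Fin n) (Fin n) ℂ) + (μ : ℂ) • Q) :
    ∃ m : ℤ, μ = (m : ℝ) ∧
      ((n % 9 = 0 ∧ m % 9 = 7) ∨ (n % 9 = 3 ∧ m % 9 = 1) ∨
        (n % 9 = 6 ∧ m % 9 = 4)) := by
  classical
  obtain ⟨hH, hdiag, htri⟩ := hQ
  obtain ⟨i0, j0, hij0, hQ1⟩ := hnt
  have hn : 0 < n := i0.pos
  set z : Fin n := ⟨0, hn⟩ with hzdef
  have hi0 : i0 ≠ z := by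
    intro h
    exact hQ1 (hsf i0 j0 hij0 (Or.inl (by rw [h])))
  have hj0 : j0 ≠ z := by
    intro h
    exact hQ1 (hsf i0 j0 hij0 (Or.inr (by rw [h])))
  have hrow : ∀ k : Fin n, k ≠ z → Q z k = 1 := fun k hk => hsf z k (Ne.symm hk) (Or.inl rfl)
  have hcol : ∀ k : Fin n, k ≠ z → Q k z = 1 := fun k hk => hsf k z hk (Or.inr rfl)
  -- integer coordinates of entries in the basis (1, ω3)
  set X : Fin n → Fin n → ℤ := fun i k =>
    if Q i k = 1 then 1 else if Q i k = ω3 then 0 else if Q i k = ω3 ^ 2 then -1 else 0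
    with hXdef
  set Y : Fin n → Fin n → ℤ := fun i k =>
    if Q i k = 1 then 0 else if Q i k = ω3 then 1 else if Q i k = ω3 ^ 2 then -1 else 0
    with hYdef
  have hXY1 : ∀ i k : Fin n, Q i k = 1 → X i k = 1 ∧ Y i k = 0 := by
    intro i k h
    constructor
    · simp only [hXdef]
      rw [h, if_pos rfl]
    · simp only [hYdef]
      rw [h, if_pos rfl]
  have hXYω : ∀ i k : Fin n, Q i k = ω3 → X i k = 0 ∧ Y i k = 1 := by
    intro i k h
    constructor
    · simp only [hXdef]
      rw [h, if_neg omega_ne_one, if_pos rfl]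
    · simp only [hYdef]
      rw [h, if_neg omega_ne_one, if_pos rfl]
  have hXYω2 : ∀ i k : Fin n, Q i k = ω3 ^ 2 → X i k = -1 ∧ Y i k = -1 := by
    intro i k h
    constructor
    · simp only [hXdef]
      rw [h, if_neg omega_sq_ne_one, if_neg omega_sq_ne_omega, if_pos rfl]
    · simp only [hYdef]
      rw [h, if_neg omega_sq_ne_one, if_neg omega_sq_ne_omega, if_pos rfl]
  have hXY0 : ∀ i k : Fin n, Q i k = 0 → X i k = 0 ∧ Y i k = 0 := by
    intro i k h
    constructor
    · simp only [hXdef]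
      rw [h, if_neg (zero_ne_one : (0:ℂ) ≠ 1), if_neg zero_ne_omega, if_neg zero_ne_omega_sq]
    · simp only [hYdef]
      rw [h, if_neg (zero_ne_one : (0:ℂ) ≠ 1), if_neg zero_ne_omega, if_neg zero_ne_omega_sq]
  have hXd : ∀ i : Fin n, X i i = 0 := fun i => (hXY0 i i (hdiag i)).1
  have hYd : ∀ i : Fin n, Y i i = 0 := fun i => (hXY0 i i (hdiag i)).2
  have hclass : ∀ i k : Fin n, i ≠ k →
      (X i k = 1 ∧ Y i k = 0) ∨ (X i k = 0 ∧ Y i k = 1) ∨ (X i k = -1 ∧ Y i k = -1) := by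
    intro i k hik
    rcases htri i k hik with h | h | h
    · exact Or.inl (hXY1 i k h)
    · exact Or.inr (Or.inl (hXYω i k h))
    · exact Or.inr (Or.inr (hXYω2 i k h))
  have hL1 : ∀ i k : Fin n, Q i k = (X i k : ℂ) + (Y i k : ℂ) * ω3 := by
    intro i k
    by_cases hik : i = k
    · subst hik
      rw [hdiag i, (hXY0 i i (hdiag i)).1, (hXY0 i i (hdiag i)).2]
      norm_num
    · rcases htri i k hik with h | h | h
      · rw [h, (hXY1 i k h).1, (hXY1 i k h).2]; norm_num
      · rw [h, (hXYω i k h).1, (hXYω i k h).2]; norm_num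
      · rw [h, (hXYω2 i k h).1, (hXYω2 i k h).2]
        push_cast
        linear_combination omega_quad
  have hherm : ∀ i k : Fin n, Q k i = (starRingEnd ℂ) (Q i k) := by
    intro i k
    conv_lhs => rw [← hH]
    simp [Matrix.conjTranspose_apply]
  have hskewY : ∀ i k : Fin n, Y k i = - Y i k := by
    intro i k
    by_cases hik : i = k
    · subst hik; rw [hYd i]; norm_num
    · rcases htri i k hik with h | h | h
      · have h2 : Q k i = 1 := by rw [hherm i k, h, map_one]
        rw [(hXY1 k i h2).2, (hXY1 i k h).2]; norm_num
      · have h2 : Q k i = ω3 ^ 2 := by rw [hherm i k, h, omega_conj]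
        rw [(hXYω2 k i h2).2, (hXYω i k h).2]
      · have h2 : Q k i = ω3 := by rw [hherm i k, h, omega_conj_sq]
        rw [(hXYω k i h2).2, (hXYω2 i k h).2]; norm_num
  -- the basic equation, entrywise
  have hsum : ∀ i j : Fin n, i ≠ j → (∑ k, Q i k * Q k j) = (μ:ℂ) * Q i j := by
    intro i j hij
    have h2 := congrFun (congrFun heq i) j
    rw [pow_two] at h2
    simpa [Matrix.mul_apply, Matrix.add_apply, Matrix.smul_apply, Matrix.one_apply_ne hij,
      smul_eq_mul] using h2
  have hsplit : ∀ i j : Fin n, (∑ k, Q i k * Q k j)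
      = ((∑ k, (X i k * X k j - Y i k * Y k j) : ℤ) : ℂ)
        + ((∑ k, (X i k * Y k j + Y i k * X k j - Y i k * Y k j) : ℤ) : ℂ) * ω3 := by
    intro i j
    have hterm : ∀ k : Fin n, Q i k * Q k j
        = ((X i k * X k j - Y i k * Y k j : ℤ) : ℂ)
          + ((X i k * Y k j + Y i k * X k j - Y i k * Y k j : ℤ) : ℂ) * ω3 := by
      intro k
      rw [hL1 i k, hL1 k j]
      push_cast
      linear_combination ((Y i k : ℂ) * (Y k j : ℂ)) * omega_quad
    rw [Finset.sum_congr rfl fun k _ => hterm k, Int.cast_sum, Int.cast_sum,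
      Finset.sum_add_distrib, ← Finset.sum_mul]
  -- Step 1 : μ is an integer m
  have hQzj0 : Q z j0 = 1 := hrow j0 hj0
  have h1 := (hsplit z j0).symm.trans (hsum z j0 (Ne.symm hj0))
  rw [hQzj0, mul_one] at h1
  set m : ℤ := ∑ k, (X z k * X k j0 - Y z k * Y k j0) with hmdef
  set B0 : ℤ := ∑ k, (X z k * Y k j0 + Y z k * X k j0 - Y z k * Y k j0) with hB0def
  have him := congrArg Complex.im h1
  simp only [Complex.add_im, Complex.mul_im, Complex.intCast_im, Complex.intCast_re,
    Complex.ofReal_im, zero_add, zero_mul, add_zero, mul_zero] at him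
  have hB0 : (B0:ℝ) = 0 := by
    rcases mul_eq_zero.1 him with h | h
    · exact h
    · exact absurd h omega_im
  have hμm : (μ:ℂ) = (m:ℂ) := by
    rw [← h1]
    have hB0' : (B0:ℂ) = 0 := by exact_mod_cast hB0
    rw [hB0', zero_mul, add_zero]
  have hμm' : μ = (m:ℝ) := by exact_mod_cast hμm
  -- the equation in integer coordinates
  have hint : ∀ i j : Fin n, i ≠ j →
      (∑ k, (X i k * X k j - Y i k * Y k j)) = m * X i j ∧
      (∑ k, (X i k * Y k j + Y i k * X k j - Y i k * Y k j)) = m * Y i j := by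
    intro i j hij
    have h := (hsplit i j).symm.trans (hsum i j hij)
    rw [hμm, hL1 i j] at h
    apply pair_unique
    rw [h]; push_cast; ring
  -- column and row sums of Y vanish
  have hYz : ∀ k : Fin n, Y z k = 0 := by
    intro k
    by_cases hk : k = z
    · rw [hk]; exact hYd z
    · exact (hXY1 z k (hrow k hk)).2
  have hYz' : ∀ k : Fin n, Y k z = 0 := by
    intro k
    by_cases hk : k = z
    · rw [hk]; exact hYd z
    · exact (hXY1 k z (hcol k hk)).2
  have hcolY : ∀ j : Fin n, (∑ k, Y k j) = 0 := by
    intro j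
    by_cases hjz : j = z
    · rw [hjz]; exact Finset.sum_eq_zero fun k _ => hYz' k
    · have h := (hint z j (Ne.symm hjz)).2
      have hpt : ∀ k : Fin n, X z k * Y k j + Y z k * X k j - Y z k * Y k j = Y k j := by
        intro k
        rw [hYz k]
        by_cases hk : k = z
        · subst hk; rw [hXd z, hYz j]; ring
        · rw [(hXY1 z k (hrow k hk)).1]; ring
      rw [Finset.sum_congr rfl fun k _ => hpt k, hYz j, mul_zero] at h
      exact h
  have hrowY : ∀ i : Fin n, (∑ k, Y i k) = 0 := by
    intro i
    have h : (∑ k, Y i k) = ∑ k, -(Y k i) :=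
      Finset.sum_congr rfl fun k _ => hskewY k i
    rw [h, Finset.sum_neg_distrib, hcolY i, neg_zero]
  -- Step 2 : 3 ∣ m + 2 - n
  have hXzj0 : X z j0 = 1 := (hXY1 z j0 hQzj0).1
  have hcolX : (∑ k, X k j0) = m + 1 := by
    have h := (hint z j0 (Ne.symm hj0)).1
    rw [hXzj0, mul_one] at h
    have hpt : ∀ k : Fin n,
        X z k * X k j0 - Y z k * Y k j0 = X k j0 - (if k = z then 1 else 0) := by
      intro k
      rw [hYz k]
      by_cases hk : k = z
      · subst hk; rw [hXd z, if_pos rfl, hXzj0]; ring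
      · rw [(hXY1 z k (hrow k hk)).1, if_neg hk]; ring
    rw [Finset.sum_congr rfl fun k _ => hpt k, Finset.sum_sub_distrib,
      Finset.sum_ite_eq' Finset.univ z (fun _ => (1:ℤ)), if_pos (Finset.mem_univ z)] at h
    omega
  have hstep2 : (3:ℤ) ∣ (m + 2 - (n:ℤ)) := by
    have hdvd : (3:ℤ) ∣ ∑ k ∈ Finset.univ.erase j0, (X k j0 + Y k j0 - 1) := by
      apply Finset.dvd_sum
      intro k hk
      rcases hclass k j0 (Finset.ne_of_mem_erase hk) with ⟨ha, hb⟩ | ⟨ha, hb⟩ | ⟨ha, hb⟩ <;>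
        rw [ha, hb] <;> norm_num
    have hsum_eq : ∑ k ∈ Finset.univ.erase j0, (X k j0 + Y k j0 - 1) = m + 2 - (n:ℤ) := by
      rw [Finset.sum_sub_distrib, Finset.sum_add_distrib,
        Finset.sum_erase_eq_sub (Finset.mem_univ j0),
        Finset.sum_erase_eq_sub (Finset.mem_univ j0), hcolX, hcolY j0, hXd j0, hYd j0,
        Finset.sum_const, Finset.card_erase_of_mem (Finset.mem_univ j0),
        Finset.card_univ, Fintype.card_fin, nsmul_eq_mul, mul_one]
      omega
    rw [hsum_eq] at hdvd
    exact hdvd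
  -- Step 3 : 3 ∣ m + 2
  have hYnt : Y i0 j0 = 1 ∨ Y i0 j0 = -1 := by
    rcases hclass i0 j0 hij0 with ⟨ha, hb⟩ | ⟨ha, hb⟩ | ⟨ha, hb⟩
    · exfalso; apply hQ1; rw [hL1 i0 j0, ha, hb]; norm_num
    · exact Or.inl hb
    · exact Or.inr hb
  have hstep3 : (3:ℤ) ∣ (m + 2) := by
    have key : ∀ k : Fin n, (3:ℤ) ∣ (X i0 k * Y k j0 + Y i0 k * X k j0 - Y i0 k * Y k j0
        - Y i0 k - Y k j0 + (if k = i0 then Y i0 j0 else 0)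
        + (if k = j0 then Y i0 j0 else 0)) := by
      intro k
      by_cases hki : k = i0
      · rw [hki, if_pos rfl, if_neg hij0, hXd i0, hYd i0]
        have hz0 : (0:ℤ) * Y i0 j0 + 0 * X i0 j0 - 0 * Y i0 j0 - 0 - Y i0 j0 + Y i0 j0 + 0
            = 0 := by ring
        rw [hz0]
        exact dvd_zero _
      · by_cases hkj : k = j0
        · rw [hkj, if_neg (fun hh => hij0 hh.symm), if_pos rfl, hXd j0, hYd j0]
          have hz0 : X i0 j0 * 0 + Y i0 j0 * 0 - Y i0 j0 * 0 - Y i0 j0 - 0 + 0 + Y i0 j0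
              = 0 := by ring
          rw [hz0]
          exact dvd_zero _
        · rcases hclass i0 k (fun h => hki h.symm) with ⟨ha, hb⟩ | ⟨ha, hb⟩ | ⟨ha, hb⟩ <;>
            rcases hclass k j0 hkj with ⟨hc, hd⟩ | ⟨hc, hd⟩ | ⟨hc, hd⟩ <;>
            rw [ha, hb, hc, hd, if_neg hki, if_neg hkj] <;> norm_num
    have hdvd := Finset.dvd_sum (fun k (_ : k ∈ Finset.univ) => key k)
    have hsum_eq : (∑ k, (X i0 k * Y k j0 + Y i0 k * X k j0 - Y i0 k * Y k j0
        - Y i0 k - Y k j0 + (if k = i0 then Y i0 j0 else 0)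
        + (if k = j0 then Y i0 j0 else 0)))
        = (m + 2) * Y i0 j0 := by
      rw [Finset.sum_add_distrib, Finset.sum_add_distrib, Finset.sum_sub_distrib,
        Finset.sum_sub_distrib, (hint i0 j0 hij0).2, hrowY i0, hcolY j0,
        Finset.sum_ite_eq' Finset.univ i0 (fun _ => Y i0 j0),
        Finset.sum_ite_eq' Finset.univ j0 (fun _ => Y i0 j0),
        if_pos (Finset.mem_univ i0), if_pos (Finset.mem_univ j0)]
      ring
    rw [hsum_eq] at hdvd
    rcases hYnt with h | h
    · rwa [h, mul_one] at hdvd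
    · rw [h, mul_neg_one, dvd_neg] at hdvd; exact hdvd
  -- eigenvalue analysis
  have htr : Q.trace = 0 := by
    simp [Matrix.trace, Matrix.diag, hdiag]
  have htrsum : (∑ i, (hH.eigenvalues i : ℂ)) = 0 := by
    have hst := hH.spectral_theorem
    have h1 : Q.trace
        = (Matrix.diagonal ((RCLike.ofReal : ℝ → ℂ) ∘ hH.eigenvalues)).trace := by
      conv_lhs => rw [hst]
      rw [Unitary.conjStarAlgAut_apply, Matrix.trace_mul_cycle, Unitary.coe_star_mul_self, one_mul]
    rw [htr, Matrix.trace_diagonal] at h1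
    exact h1.symm
  have hsum0 : (∑ i, hH.eigenvalues i) = (0:ℝ) := by
    have h : ((∑ i, hH.eigenvalues i : ℝ) : ℂ) = 0 := by
      push_cast
      exact htrsum
    exact_mod_cast h
  have heig : ∀ i : Fin n, (hH.eigenvalues i)^2 = ((n:ℝ) - 1) + (m:ℝ) * hH.eigenvalues i := by
    intro i
    set v : Fin n → ℂ := ⇑(hH.eigenvectorBasis i) with hvdef
    have hv1 : Q.mulVec v = hH.eigenvalues i • v :=
      hH.mulVec_eigenvectorBasis i
    obtain ⟨l, hl⟩ : ∃ l, v l ≠ 0 := by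
      by_contra hc
      push_neg at hc
      exact hH.eigenvectorBasis.orthonormal.ne_zero i (by ext l; exact hc l)
    have h2 : (Q^2).mulVec v
        = (hH.eigenvalues i • (hH.eigenvalues i • v)) := by
      rw [pow_two, ← Matrix.mulVec_mulVec, hv1, Matrix.mulVec_smul, hv1]
    rw [heq, Matrix.add_mulVec, Matrix.smul_mulVec, Matrix.smul_mulVec,
      Matrix.one_mulVec, hv1] at h2
    have h5 := congrFun h2 l
    simp only [Pi.add_apply, Pi.smul_apply, smul_eq_mul, Complex.real_smul] at h5
    have h6 : ((hH.eigenvalues i : ℂ))^2 = ((n:ℂ) - 1) + (m:ℂ) * (hH.eigenvalues i) := by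
      have h7 : ((hH.eigenvalues i : ℂ))^2 * v l
          = (((n:ℂ) - 1) + (m:ℂ) * (hH.eigenvalues i)) * v l := by
        rw [hμm] at h5
        linear_combination -h5
      exact mul_right_cancel₀ hl h7
    exact_mod_cast h6
  -- discriminant is a perfect square
  have hsq : ∃ d : ℤ, d^2 = m^2 + 4*((n:ℤ) - 1) := by
    have hΔnn : (0:ℝ) ≤ ((m^2 + 4*((n:ℤ) - 1) : ℤ) : ℝ) := by
      have h1 : (1:ℝ) ≤ (n:ℝ) := by exact_mod_cast hn
      push_cast
      nlinarith [sq_nonneg ((m:ℝ))]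
    set s := Real.sqrt ((m^2 + 4*((n:ℤ) - 1) : ℤ) : ℝ) with hsdef
    have hs2 : s^2 = ((m^2 + 4*((n:ℤ) - 1) : ℤ) : ℝ) := Real.sq_sqrt hΔnn
    have hs2' : s^2 = (m:ℝ)^2 + 4*((n:ℝ) - 1) := by rw [hs2]; push_cast; ring
    have hcases : ∀ i : Fin n,
        2 * hH.eigenvalues i - (m:ℝ) = s ∨ 2 * hH.eigenvalues i - (m:ℝ) = -s := by
      intro i
      have h := heig i
      have hfac : (2*hH.eigenvalues i - (m:ℝ) - s) * (2*hH.eigenvalues i - (m:ℝ) + s) = 0 := by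
        linear_combination 4*h - hs2'
      rcases mul_eq_zero.1 hfac with h' | h'
      · left; linarith
      · right; linarith
    set ε : Fin n → ℤ := fun i => if 2 * hH.eigenvalues i - (m:ℝ) = s then 1 else -1 with hεdef
    have hεs : ∀ i : Fin n, 2 * hH.eigenvalues i - (m:ℝ) = (ε i : ℝ) * s := by
      intro i
      by_cases hc : 2 * hH.eigenvalues i - (m:ℝ) = s
      · rw [hεdef]; simp only [if_pos hc]; push_cast; rw [one_mul]; exact hc
      · rw [hεdef]; simp only [if_neg hc]; push_cast
        rw [neg_one_mul]
        exact (hcases i).resolve_left hc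
    have hsum_eps : -((n:ℝ) * (m:ℝ)) = ((∑ i, ε i : ℤ):ℝ) * s := by
      have hl : ∑ i : Fin n, (2 * hH.eigenvalues i - (m:ℝ)) = -((n:ℝ) * (m:ℝ)) := by
        rw [Finset.sum_sub_distrib, ← Finset.mul_sum, hsum0, Finset.sum_const,
          Finset.card_univ, Fintype.card_fin, nsmul_eq_mul]
        ring
      have hr : ∑ i : Fin n, ((ε i:ℝ) * s) = ((∑ i, ε i : ℤ):ℝ) * s := by
        rw [← Finset.sum_mul]
        push_cast
        ring
      rw [← hl, Finset.sum_congr rfl fun i _ => hεs i, hr]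
    by_cases hzz : (∑ i, ε i) = 0
    · exfalso
      rw [hzz] at hsum_eps
      simp only [Int.cast_zero, zero_mul, neg_eq_zero] at hsum_eps
      rcases mul_eq_zero.1 hsum_eps with h | h
      · have : (n:ℝ) ≠ 0 := by positivity
        exact this h
      · have hm0 : m = 0 := by exact_mod_cast h
        rw [hm0] at hstep3
        norm_num at hstep3
    · have hz : (((∑ i, ε i : ℤ)):ℝ) ≠ 0 := by exact_mod_cast hzz
      have hsrat : s = ((-(n:ℤ)*m : ℤ):ℝ) / (((∑ i, ε i : ℤ)):ℝ) := by
        rw [eq_div_iff hz]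
        have he2 := hsum_eps
        push_cast at he2 ⊢
        linarith [he2]
      have hrat : ¬ Irrational s := by
        rw [hsrat]
        have hcast : ((-(n:ℤ)*m : ℤ):ℝ) / (((∑ i, ε i : ℤ)):ℝ)
            = (((((-(n:ℤ)*m : ℤ) : ℚ) / ((∑ i, ε i : ℤ) : ℚ)) : ℚ) : ℝ) := by
          push_cast
          ring
        rw [hcast]
        exact Rat.not_irrational _
      have hint' : ∃ y : ℤ, s = y := by
        by_contra hc
        exact hrat (irrational_nrt_of_notint_nrt 2 (m^2 + 4*((n:ℤ) - 1)) (by rw [hs2]) hc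
          (by norm_num))
      obtain ⟨d, hd⟩ := hint'
      refine ⟨d, ?_⟩
      have hdr : ((d:ℝ))^2 = ((m^2 + 4*((n:ℤ) - 1) : ℤ) : ℝ) := by rw [← hd]; exact hs2
      exact_mod_cast hdr
  obtain ⟨d, hd⟩ := hsq
  obtain ⟨a, ha⟩ := hstep3
  have h3d : (3:ℤ) ∣ d := by
    apply Int.prime_three.dvd_of_dvd_pow (n := 2)
    obtain ⟨b, hb⟩ := hstep2
    exact ⟨3*a^2 - 4*b, by linear_combination hd + (m+2+3*a)*ha - 4*hb⟩
  obtain ⟨e, he⟩ := h3d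
  have h9 : (9:ℤ) ∣ ((n:ℤ) - 2 - m) := by
    have h49 : 4*((n:ℤ) - 2 - m) = 9*(e^2 - a^2) := by
      linear_combination -hd + (d+3*e)*he - (m+2+3*a)*ha
    omega
  refine ⟨m, hμm', ?_⟩
  omega
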